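/- arXiv:2405.09504 — 4 statements merged into one kernel-verified Lean document; each statement's English description precedes it below -/
import Mathlib

section
/- Let (A, α) be a coalgebra for F arising as the colimit (with injections π_i) of a diagram D : D → F-Coalg with D ∈ Fil, such that F preserves the colimit of V ∘ D. Then for every coalgebra (B, β) with Fil-presentable carrier B, every coalgebra morphism h : (B, β) → (A, α) factorizes in F-Coalg through some colimit injection π_j : (X_j, x_j) → (A, α), i.e., h = π_j ∘ h' for some coalgebra morphism h' : (B, β) → (X_j, x_j). -/
open CategoryTheory CategoryTheory.Limits Opposite

universe u

variable {𝒞 : Type u} [Category.{u} 𝒞]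

/-- An object `X` is `Fil`-presentable if its hom-functor preserves colimits of all
diagrams whose scheme lies in `Fil`. -/
def FilPresentable (Fil : Set Cat.{u, u}) (X : 𝒞) : Prop :=
  ∀ J ∈ Fil, ∀ D : J ⥤ 𝒞, Nonempty (PreservesColimit D (coyoneda.obj (op X)))

/-- The canonical slice category `𝒮/X` of arrows into `X` with domain in `𝒮`. -/
abbrev SliceCat (𝒮 : Set 𝒞) (X : 𝒞) : Type u :=
  ObjectProperty.FullSubcategory (fun f : Over X => f.left ∈ 𝒮)

/-- The canonical diagram `𝒮/X ⥤ 𝒞`, `(S, f) ↦ S`. -/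
abbrev canDiag (𝒮 : Set 𝒞) (X : 𝒞) : SliceCat 𝒮 X ⥤ 𝒞 :=
  ObjectProperty.ι _ ⋙ Over.forget X

/-- The canonical cocone over the canonical diagram, with tip `X`. -/
@[simps]
def canCocone (𝒮 : Set 𝒞) (X : 𝒞) : Cocone (canDiag 𝒮 X) where
  pt := X
  ι := { app := fun f => f.obj.hom
         naturality := fun f g h => by simp [Over.w h.hom] }

/-- A witness that `𝒞` is `Fil`-accessible: a set `Cp` of `Fil`-presentable objects
such that each canonical slice lies in `Fil` and each object is the colimit of its
canonical diagram. -/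
structure FilAccessibleData (Fil : Set Cat.{u, u}) (𝒞 : Type u) [Category.{u} 𝒞] where
  Cp : Set 𝒞
  presentable : ∀ S ∈ Cp, FilPresentable Fil S
  sliceInFil : ∀ X : 𝒞, Cat.of (SliceCat Cp X) ∈ Fil
  canColim : ∀ X : 𝒞, Nonempty (IsColimit (canCocone Cp X))

/-- An `F`-coalgebra is recursive if into every `F`-algebra there is a unique
coalgebra-to-algebra morphism. -/
def IsRecursive {F : 𝒞 ⥤ 𝒞} (R : Endofunctor.Coalgebra F) : Prop :=
  ∀ (A : 𝒞) (a : F.obj A ⟶ A), ∃! h : R.V ⟶ A, h = R.str ≫ F.map h ≫ a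

/-- Let `(A, α) = cc.pt` be the colimit of a diagram `D : J ⥤ F-Coalg` with `J ∈ Fil`,
created from the colimit of `V ∘ D` in `𝒞`, and suppose `F` preserves that colimit.
Then every coalgebra morphism from a coalgebra `(B, β)` with `Fil`-presentable carrier
into `(A, α)` factorizes through one of the colimit injections in `F-Coalg`. -/
theorem coalg_hom_to_colim_factors
    (Fil : Set Cat.{u, u}) (hFil : ∀ J ∈ Fil, IsFiltered J)
    (acc : FilAccessibleData Fil 𝒞) (F : 𝒞 ⥤ 𝒞)
    (J : Cat.{u, u}) (hJ : J ∈ Fil)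
    (D : J ⥤ Endofunctor.Coalgebra F)
    (cc : Cocone D)
    (hcreate : IsColimit ((Endofunctor.Coalgebra.forget F).mapCocone cc))
    (hFpres : IsColimit (F.mapCocone ((Endofunctor.Coalgebra.forget F).mapCocone cc)))
    (B : Endofunctor.Coalgebra F) (hB : FilPresentable Fil B.V)
    (h : B ⟶ cc.pt) :
    ∃ (j : J) (h' : B ⟶ D.obj j), h' ≫ cc.ι.app j = h := by
  haveI : IsFiltered J := hFil J hJ
  set G := coyoneda.obj (op B.V)
  -- Step 1: factor the underlying map through some stage i
  haveI := (hB J hJ (D ⋙ Endofunctor.Coalgebra.forget F)).some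
  have hc1 : IsColimit (G.mapCocone ((Endofunctor.Coalgebra.forget F).mapCocone cc)) :=
    isColimitOfPreserves G hcreate
  obtain ⟨i, g, hg⟩ := Types.jointly_surjective _ hc1 h.f
  change B.V ⟶ (D.obj i).V at g
  -- hg : g ≫ (cc.ι.app i).f = h.f
  -- Step 2: the two maps B.V ⟶ F.obj (D.obj i).V agree in the colimit F.obj A
  haveI := (hB J hJ ((D ⋙ Endofunctor.Coalgebra.forget F) ⋙ F)).some
  have hc2 : IsColimit (G.mapCocone (F.mapCocone
      ((Endofunctor.Coalgebra.forget F).mapCocone cc))) :=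
    isColimitOfPreserves G hFpres
  have heq : (G.mapCocone (F.mapCocone ((Endofunctor.Coalgebra.forget F).mapCocone cc))).ι.app i
        (B.str ≫ F.map g)
      = (G.mapCocone (F.mapCocone ((Endofunctor.Coalgebra.forget F).mapCocone cc))).ι.app i
        (g ≫ (D.obj i).str) := by
    show (B.str ≫ F.map g) ≫ F.map (cc.ι.app i).f = (g ≫ (D.obj i).str) ≫ F.map (cc.ι.app i).f
    have hg' : g ≫ (cc.ι.app i).f = h.f := hg
    have h1 : (D.obj i).str ≫ F.map (cc.ι.app i).f = (cc.ι.app i).f ≫ cc.pt.str :=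
      (cc.ι.app i).h
    have h2 := h.h
    calc (B.str ≫ F.map g) ≫ F.map (cc.ι.app i).f
        = B.str ≫ F.map (g ≫ (cc.ι.app i).f) := by rw [Category.assoc, ← F.map_comp]
      _ = B.str ≫ F.map h.f := by rw [hg']
      _ = h.f ≫ cc.pt.str := h2
      _ = (g ≫ (cc.ι.app i).f) ≫ cc.pt.str := by rw [hg']
      _ = g ≫ ((D.obj i).str ≫ F.map (cc.ι.app i).f) := by rw [Category.assoc, ← h1]
      _ = (g ≫ (D.obj i).str) ≫ F.map (cc.ι.app i).f := by rw [Category.assoc]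
  rw [Types.FilteredColimit.isColimit_eq_iff _ hc2] at heq
  obtain ⟨k, f₁, f₂, hk⟩ := heq
  -- coequalize f₁ and f₂
  obtain ⟨k', w, hw⟩ : ∃ (k' : J) (w : k ⟶ k'), f₁ ≫ w = f₂ ≫ w :=
    ⟨IsFiltered.coeq f₁ f₂, IsFiltered.coeqHom f₁ f₂, IsFiltered.coeq_condition f₁ f₂⟩
  have hk' : (B.str ≫ F.map g) ≫ F.map (D.map (f₁ ≫ w)).f
      = (g ≫ (D.obj i).str) ≫ F.map (D.map (f₁ ≫ w)).f := by
    have hk2 : (B.str ≫ F.map g) ≫ F.map (D.map f₁).f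
        = (g ≫ (D.obj i).str) ≫ F.map (D.map f₂).f := hk
    calc (B.str ≫ F.map g) ≫ F.map (D.map (f₁ ≫ w)).f
        = ((B.str ≫ F.map g) ≫ F.map (D.map f₁).f) ≫ F.map (D.map w).f := by
          rw [D.map_comp]; simp [Endofunctor.Coalgebra.comp_f, F.map_comp]
      _ = ((g ≫ (D.obj i).str) ≫ F.map (D.map f₂).f) ≫ F.map (D.map w).f := by rw [hk2]
      _ = (g ≫ (D.obj i).str) ≫ F.map (D.map (f₂ ≫ w)).f := by
          rw [D.map_comp]; simp [Endofunctor.Coalgebra.comp_f, F.map_comp]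
      _ = _ := by rw [hw]
  -- build the coalgebra morphism
  refine ⟨k', ⟨g ≫ (D.map (f₁ ≫ w)).f, ?_⟩, ?_⟩
  · -- B.str ≫ F.map (g ≫ (D.map _).f) = (g ≫ (D.map _).f) ≫ (D.obj k').str
    have hmor := (D.map (f₁ ≫ w)).h
    rw [F.map_comp]
    calc B.str ≫ F.map g ≫ F.map (D.map (f₁ ≫ w)).f
        = (g ≫ (D.obj i).str) ≫ F.map (D.map (f₁ ≫ w)).f := by
          simpa [Category.assoc] using hk'
      _ = g ≫ ((D.obj i).str ≫ F.map (D.map (f₁ ≫ w)).f) := by simp [Category.assoc]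
      _ = g ≫ (D.map (f₁ ≫ w)).f ≫ (D.obj k').str := by rw [hmor]
      _ = (g ≫ (D.map (f₁ ≫ w)).f) ≫ (D.obj k').str := by simp [Category.assoc]
  · apply Endofunctor.Coalgebra.Hom.ext
    show (g ≫ (D.map (f₁ ≫ w)).f) ≫ (cc.ι.app k').f = h.f
    have hnat : D.map (f₁ ≫ w) ≫ cc.ι.app k' = cc.ι.app i := cc.w (f₁ ≫ w)
    have hnat' : (D.map (f₁ ≫ w)).f ≫ (cc.ι.app k').f = (cc.ι.app i).f := by
      rw [← Endofunctor.Coalgebra.comp_f, hnat]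
    rw [Category.assoc, hnat']
    exact hg
end

section
/- Let (A, α) be the colimit of the (full) diagram of all finrec coalgebras, assuming this colimit exists in C and is preserved by F, and that this diagram scheme lies in Fil. Then for every finrec coalgebra (C, c), there is a unique coalgebra morphism (C, c) → (A, α). -/
open CategoryTheory CategoryTheory.Limits Opposite

universe u

variable {𝒞 : Type u} [Category.{u} 𝒞]

/-- The full subcategory of recursive coalgebras with carrier in the generating set. -/
abbrev FinrecSub (F : 𝒞 ⥤ 𝒞) (Cp : Set 𝒞) : Type u :=
  ObjectProperty.FullSubcategory (fun R : Endofunctor.Coalgebra F => IsRecursive R ∧ R.V ∈ Cp)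

/-- Let `(A, α) = cc.pt` be the colimit of the full diagram of all finrec coalgebras
(with carrier in `Cp`), created from a colimit in `𝒞` which is preserved by `F`, where
the diagram scheme lies in `Fil`. Then for every finrec coalgebra `(C, c)` there is a
unique coalgebra morphism `(C, c) ⟶ (A, α)`. -/
theorem finrec_universal_property
    (Fil : Set Cat.{u, u}) (hFil : ∀ J ∈ Fil, IsFiltered J)
    (acc : FilAccessibleData Fil 𝒞) (F : 𝒞 ⥤ 𝒞)
    (hcoprod : ∀ X Y : 𝒞, FilPresentable Fil X → FilPresentable Fil Y →
      HasBinaryCoproduct X Y)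
    (hscheme : Cat.of (FinrecSub F acc.Cp) ∈ Fil)
    (cc : Cocone (ObjectProperty.ι
      (fun R : Endofunctor.Coalgebra F => IsRecursive R ∧ R.V ∈ acc.Cp)))
    (hcreate : IsColimit ((Endofunctor.Coalgebra.forget F).mapCocone cc))
    (hFpres : IsColimit (F.mapCocone ((Endofunctor.Coalgebra.forget F).mapCocone cc)))
    (R : Endofunctor.Coalgebra F) (hRrec : IsRecursive R)
    (hRpres : FilPresentable Fil R.V) :
    Nonempty (Unique (R ⟶ cc.pt)) := by
  classical
  haveI hJfil : IsFiltered (FinrecSub F acc.Cp) := hFil _ hscheme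
  -- Step 1: `R.V` is a retract of an object of `Cp`.
  obtain ⟨hc⟩ := acc.canColim R.V
  have hcT : IsColimit ((coyoneda.obj (op R.V)).mapCocone (canCocone acc.Cp R.V)) :=
    haveI := (hRpres (Cat.of (SliceCat acc.Cp R.V)) (acc.sliceInFil R.V)
      (canDiag acc.Cp R.V)).some
    (this.preserves hc).some
  obtain ⟨j0, v, hv0⟩ := Types.jointly_surjective _ hcT (𝟙 R.V)
  revert hv0
  change R.V ⟶ j0.obj.left at v
  intro hv0
  have hv : v ≫ j0.obj.hom = 𝟙 R.V := hv0
  -- Step 2: the recursive coalgebra structure on the retract.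
  revert v hv0 hv
  set S : 𝒞 := j0.obj.left with hSdef
  set f : S ⟶ R.V := j0.obj.hom with hfdef
  intro v hv0 hv
  set Scoalg : Endofunctor.Coalgebra F := ⟨S, f ≫ R.str ≫ F.map v⟩ with hSc
  have hstr : Scoalg.str = f ≫ R.str ≫ F.map v := rfl
  have hSrec : IsRecursive Scoalg := by
    intro B b
    obtain ⟨h, hh, huniq⟩ := hRrec B b
    refine ⟨f ≫ h, ?_, ?_⟩
    · show f ≫ h = Scoalg.str ≫ F.map (f ≫ h) ≫ b
      have : Scoalg.str ≫ F.map (f ≫ h) ≫ b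
          = f ≫ (R.str ≫ F.map ((v ≫ f) ≫ h) ≫ b) := by
        simp [hstr, F.map_comp]
      rw [this, hv]
      simp [← hh]
    · intro k' hk'
      have hvk : v ≫ k' = h := by
        apply huniq (v ≫ k')
        show v ≫ k' = R.str ≫ F.map (v ≫ k') ≫ b
        calc v ≫ k' = v ≫ Scoalg.str ≫ F.map k' ≫ b := by rw [← hk']
          _ = (v ≫ f) ≫ R.str ≫ F.map v ≫ F.map k' ≫ b := by simp [hstr]
          _ = R.str ≫ F.map (v ≫ k') ≫ b := by rw [hv]; simp [F.map_comp]
      calc k' = Scoalg.str ≫ F.map k' ≫ b := hk'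
        _ = f ≫ R.str ≫ F.map (v ≫ k') ≫ b := by simp [hstr, F.map_comp]
        _ = f ≫ R.str ≫ F.map h ≫ b := by rw [hvk]
        _ = f ≫ h := by rw [← hh]
  set SJ : FinrecSub F acc.Cp := ⟨Scoalg, hSrec, j0.property⟩ with hSJ
  have hvh : R.str ≫ F.map v = v ≫ Scoalg.str := by
    have : v ≫ Scoalg.str = (v ≫ f) ≫ R.str ≫ F.map v := by simp [hstr]
    rw [this, hv, Category.id_comp]
  have hfh : Scoalg.str ≫ F.map f = f ≫ R.str := by
    have : Scoalg.str ≫ F.map f = f ≫ R.str ≫ F.map (v ≫ f) := by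
      simp [hstr, F.map_comp]
    rw [this, hv, F.map_id, Category.comp_id]
  -- Step 3: any coalgebra morphism from a diagram object agrees with the cocone leg.
  have key : ∀ (i : FinrecSub F acc.Cp) (u : i.obj ⟶ cc.pt), u.f = (cc.ι.app i).f := by
    intro i u
    have hX := i.property.2
    have h1 : IsColimit ((coyoneda.obj (op i.obj.V)).mapCocone
        ((Endofunctor.Coalgebra.forget F).mapCocone cc)) :=
      haveI := (acc.presentable _ hX (Cat.of (FinrecSub F acc.Cp)) hscheme
        (ObjectProperty.ι (fun R : Endofunctor.Coalgebra F => IsRecursive R ∧ R.V ∈ acc.Cp) ⋙ Endofunctor.Coalgebra.forget F)).some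
      (this.preserves hcreate).some
    have h2 : IsColimit ((coyoneda.obj (op i.obj.V)).mapCocone
        (F.mapCocone ((Endofunctor.Coalgebra.forget F).mapCocone cc))) :=
      haveI := (acc.presentable _ hX (Cat.of (FinrecSub F acc.Cp)) hscheme
        ((ObjectProperty.ι (fun R : Endofunctor.Coalgebra F => IsRecursive R ∧ R.V ∈ acc.Cp) ⋙ Endofunctor.Coalgebra.forget F) ⋙ F)).some
      (this.preserves hFpres).some
    obtain ⟨j, y, hy0⟩ := Types.jointly_surjective _ h1 u.f
    change i.obj.V ⟶ j.obj.V at y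
    have hy : y ≫ (cc.ι.app j).f = u.f := hy0
    have heq : ((coyoneda.obj (op i.obj.V)).mapCocone
          (F.mapCocone ((Endofunctor.Coalgebra.forget F).mapCocone cc))).ι.app j
            (y ≫ j.obj.str)
        = ((coyoneda.obj (op i.obj.V)).mapCocone
          (F.mapCocone ((Endofunctor.Coalgebra.forget F).mapCocone cc))).ι.app j
            (i.obj.str ≫ F.map y) := by
      show (y ≫ j.obj.str) ≫ F.map (cc.ι.app j).f
          = (i.obj.str ≫ F.map y) ≫ F.map (cc.ι.app j).f
      have hcj : j.obj.str ≫ F.map (cc.ι.app j).f = (cc.ι.app j).f ≫ cc.pt.str :=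
        (cc.ι.app j).h
      calc (y ≫ j.obj.str) ≫ F.map (cc.ι.app j).f
          = y ≫ (j.obj.str ≫ F.map (cc.ι.app j).f) := by simp
        _ = y ≫ (cc.ι.app j).f ≫ cc.pt.str := by rw [hcj]
        _ = u.f ≫ cc.pt.str := by rw [← hy]; simp
        _ = i.obj.str ≫ F.map u.f := by rw [u.h]
        _ = (i.obj.str ≫ F.map y) ≫ F.map (cc.ι.app j).f := by
            rw [← hy]; simp [F.map_comp]
    rw [Types.FilteredColimit.isColimit_eq_iff _ h2] at heq
    obtain ⟨k, φ, ψ, hk0⟩ := heq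
    have hk : (y ≫ j.obj.str) ≫ F.map φ.hom.f = (i.obj.str ≫ F.map y) ≫ F.map ψ.hom.f := hk0
    obtain ⟨l, χ, hcoeq⟩ : ∃ (l : FinrecSub F acc.Cp) (χ : k ⟶ l),
        φ.hom.f ≫ χ.hom.f = ψ.hom.f ≫ χ.hom.f := by
      refine ⟨IsFiltered.coeq φ ψ, IsFiltered.coeqHom φ ψ, ?_⟩
      calc φ.hom.f ≫ (IsFiltered.coeqHom φ ψ).hom.f = (φ ≫ IsFiltered.coeqHom φ ψ).hom.f := rfl
        _ = (ψ ≫ IsFiltered.coeqHom φ ψ).hom.f := by rw [IsFiltered.coeq_condition φ ψ]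
        _ = ψ.hom.f ≫ (IsFiltered.coeqHom φ ψ).hom.f := rfl
    set w : i.obj.V ⟶ l.obj.V := y ≫ φ.hom.f ≫ χ.hom.f with hw
    have hwcoalg : i.obj.str ≫ F.map w = w ≫ l.obj.str := by
      have step := congrArg (· ≫ F.map χ.hom.f) hk
      simp only [Category.assoc, ← F.map_comp] at step
      calc i.obj.str ≫ F.map w
          = (i.obj.str ≫ F.map y) ≫ F.map (ψ.hom.f ≫ χ.hom.f) := by
            rw [hw, ← hcoeq]; simp [F.map_comp]
        _ = y ≫ j.obj.str ≫ F.map (φ.hom.f ≫ χ.hom.f) := by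
            simpa [F.map_comp] using step.symm
        _ = y ≫ φ.hom.f ≫ k.obj.str ≫ F.map χ.hom.f := by
            rw [F.map_comp, ← Category.assoc j.obj.str, φ.hom.h]; simp
        _ = y ≫ φ.hom.f ≫ χ.hom.f ≫ l.obj.str := by rw [χ.hom.h]
        _ = w ≫ l.obj.str := by simp [hw]
    set whom : i ⟶ l := ObjectProperty.homMk (⟨w, hwcoalg⟩ : i.obj ⟶ l.obj) with hwhom
    have hnat : (cc.ι.app i).f = whom.hom.f ≫ (cc.ι.app l).f := by
      have h1 := cc.ι.naturality whom
      have h2 := congrArg Endofunctor.Coalgebra.Hom.f h1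
      simpa using h2.symm
    have hnatC : (cc.ι.app j).f = (φ.hom.f ≫ χ.hom.f) ≫ (cc.ι.app l).f := by
      have h1 := cc.ι.naturality (φ ≫ χ)
      have h2 := congrArg Endofunctor.Coalgebra.Hom.f h1
      have h3 : (φ ≫ χ).hom.f = φ.hom.f ≫ χ.hom.f := rfl
      simpa [h3] using h2.symm
    calc u.f = y ≫ (cc.ι.app j).f := hy.symm
      _ = w ≫ (cc.ι.app l).f := by rw [hnatC, hw]; simp
      _ = whom.hom.f ≫ (cc.ι.app l).f := rfl
      _ = (cc.ι.app i).f := hnat.symm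
  -- Conclusion.
  have huniq : ∀ g : R ⟶ cc.pt, g.f = v ≫ (cc.ι.app SJ).f := by
    intro g
    have hkey := key SJ ((⟨f, hfh⟩ : Scoalg ⟶ R) ≫ g)
    have hfg : f ≫ g.f = (cc.ι.app SJ).f := hkey
    calc g.f = (v ≫ f) ≫ g.f := by rw [hv]; simp
      _ = v ≫ (cc.ι.app SJ).f := by rw [Category.assoc, hfg]
  refine ⟨⟨⟨(⟨v, hvh⟩ : R ⟶ Scoalg) ≫ cc.ι.app SJ⟩, fun g => ?_⟩⟩
  apply Endofunctor.Coalgebra.ext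
  rw [huniq g]
  rfl
end

section
/- Under the same assumptions, the terminal locally finrec coalgebra (A, α) — the colimit of all finrec coalgebras — has an invertible structure map α : A → FA, and (A, α⁻¹) is the initial F-algebra. -/
open CategoryTheory CategoryTheory.Limits Opposite

universe u

variable {𝒞 : Type u} [Category.{u} 𝒞]

/-- A coalgebra is locally finrec if it arises as a colimit (created by the forgetful
functor) of a diagram of finrec coalgebras. -/
def LocallyFinrec (Fil : Set Cat.{u, u}) {F : 𝒞 ⥤ 𝒞}
    (R : Endofunctor.Coalgebra F) : Prop :=
  ∃ (J : Cat.{u, u}) (D : J ⥤ Endofunctor.Coalgebra F) (cc : Cocone D),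
    (∀ j : J, IsRecursive (D.obj j) ∧ FilPresentable Fil (D.obj j).V) ∧
    Nonempty (IsColimit ((Endofunctor.Coalgebra.forget F).mapCocone cc)) ∧
    cc.pt = R

-- AUX 1: retract of a recursive coalgebra
lemma retract_isRecursive {F : 𝒞 ⥤ 𝒞} {R : Endofunctor.Coalgebra F} (hR : IsRecursive R)
    {S : 𝒞} (s : R.V ⟶ S) (p : S ⟶ R.V) (hsp : s ≫ p = 𝟙 R.V) :
    IsRecursive (⟨S, p ≫ R.str ≫ F.map s⟩ : Endofunctor.Coalgebra F) := by
  intro B b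
  obtain ⟨h, hh, hu⟩ := hR B b
  have hFsp : ∀ (q : R.V ⟶ B), F.map s ≫ F.map (p ≫ q) = F.map q := by
    intro q
    rw [← F.map_comp, ← Category.assoc, hsp, Category.id_comp]
  refine ⟨p ≫ h, ?_, ?_⟩
  · dsimp only
    simp only [Category.assoc]
    rw [show F.map s ≫ F.map (p ≫ h) ≫ b = F.map h ≫ b by
      rw [← Category.assoc, hFsp h]]
    conv_rhs => rw [← hh]
  · intro k hk
    dsimp only at hk
    have hsk : s ≫ k = h := by
      refine hu _ ?_
      show s ≫ k = R.str ≫ F.map (s ≫ k) ≫ b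
      conv_lhs => rw [hk]
      calc s ≫ (p ≫ R.str ≫ F.map s) ≫ F.map k ≫ b
          = (s ≫ p) ≫ R.str ≫ F.map s ≫ F.map k ≫ b := by simp only [Category.assoc]
        _ = R.str ≫ F.map (s ≫ k) ≫ b := by
            rw [hsp, Category.id_comp, F.map_comp]; simp only [Category.assoc]
    rw [hk]
    calc (p ≫ R.str ≫ F.map s) ≫ F.map k ≫ b
        = p ≫ R.str ≫ F.map (s ≫ k) ≫ b := by
          rw [F.map_comp]; simp only [Category.assoc]
      _ = p ≫ h := by rw [hsk]; conv_rhs => rw [hh]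

-- AUX 2: presentable objects are retracts of Cp objects
lemma exists_retract (Fil : Set Cat.{u, u}) (acc : FilAccessibleData Fil 𝒞) {X : 𝒞}
    (hX : FilPresentable Fil X) :
    ∃ S, S ∈ acc.Cp ∧ ∃ (s : X ⟶ S) (p : S ⟶ X), s ≫ p = 𝟙 X := by
  obtain ⟨hcan⟩ := acc.canColim X
  obtain ⟨P⟩ := hX _ (acc.sliceInFil X) (canDiag acc.Cp X)
  haveI : PreservesColimit (canDiag acc.Cp X) (coyoneda.obj (op X)) := P
  have c : IsColimit ((coyoneda.obj (op X)).mapCocone (canCocone acc.Cp X)) :=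
    isColimitOfPreserves _ hcan
  obtain ⟨o, s, hs⟩ := Types.jointly_surjective _ c (𝟙 X)
  exact ⟨o.obj.left, o.property, s, o.obj.hom, hs⟩

-- AUX 3: eqToHom of equal coalgebras is a coalgebra morphism
lemma coalg_eqToHom_str {F : 𝒞 ⥤ 𝒞} {X Y : Endofunctor.Coalgebra F} (h : X = Y) :
    X.str ≫ F.map (eqToHom (congrArg Endofunctor.Coalgebra.V h)) =
      eqToHom (congrArg Endofunctor.Coalgebra.V h) ≫ Y.str := by
  subst h; simp

-- AUX 4: a colimit (in 𝒞, created) of recursive coalgebras is recursive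
lemma recursive_of_colimit {J : Type u} [Category.{u} J] {F : 𝒞 ⥤ 𝒞}
    (D : J ⥤ Endofunctor.Coalgebra F) (c : Cocone D)
    (hrec : ∀ j, IsRecursive (D.obj j))
    (hc : IsColimit ((Endofunctor.Coalgebra.forget F).mapCocone c)) :
    IsRecursive c.pt := by
  intro B b
  choose e he hun using fun j => hrec j B b
  have hnat : ∀ {j j' : J} (m : j ⟶ j'), (D.map m).f ≫ e j' = e j := by
    intro j j' m
    refine (hun j _ ?_).symm.symm
    show (D.map m).f ≫ e j' = (D.obj j).str ≫ F.map ((D.map m).f ≫ e j') ≫ b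
    conv_lhs => rw [he j']
    calc (D.map m).f ≫ (D.obj j').str ≫ F.map (e j') ≫ b
        = ((D.obj j).str ≫ F.map (D.map m).f) ≫ F.map (e j') ≫ b := by
          rw [(D.map m).h]; simp only [Category.assoc]
      _ = (D.obj j).str ≫ F.map ((D.map m).f ≫ e j') ≫ b := by
          rw [F.map_comp]; simp only [Category.assoc]
  let K : Cocone (D ⋙ Endofunctor.Coalgebra.forget F) :=
    { pt := B
      ι := { app := fun j => e j
             naturality := fun j j' m => by
               exact (hnat m).trans (Category.comp_id _).symm } }
  have hfac : ∀ j, (c.ι.app j).f ≫ hc.desc K = e j := fun j => hc.fac K j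
  refine ⟨hc.desc K, ?_, ?_⟩
  · apply hc.hom_ext
    intro j
    dsimp only [Functor.mapCocone_ι_app, Endofunctor.Coalgebra.forget]
    rw [hfac j]
    calc e j = (D.obj j).str ≫ F.map (e j) ≫ b := he j
      _ = (D.obj j).str ≫ F.map ((c.ι.app j).f ≫ hc.desc K) ≫ b := by rw [hfac j]
      _ = ((D.obj j).str ≫ F.map (c.ι.app j).f) ≫ F.map (hc.desc K) ≫ b := by
          erw [F.map_comp]; simp only [Category.assoc]
      _ = (c.ι.app j).f ≫ c.pt.str ≫ F.map (hc.desc K) ≫ b := by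
          rw [(c.ι.app j).h]; simp only [Category.assoc]; rfl
  · intro y hy
    apply hc.hom_ext
    intro j
    dsimp only [Functor.mapCocone_ι_app, Endofunctor.Coalgebra.forget]
    rw [hfac j]
    refine hun j _ ?_
    show (c.ι.app j).f ≫ y = (D.obj j).str ≫ F.map ((c.ι.app j).f ≫ y) ≫ b
    conv_lhs => rw [hy]
    calc (c.ι.app j).f ≫ c.pt.str ≫ F.map y ≫ b
        = ((D.obj j).str ≫ F.map (c.ι.app j).f) ≫ F.map y ≫ b := by
          rw [(c.ι.app j).h]; simp only [Category.assoc]; rfl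
      _ = (D.obj j).str ≫ F.map ((c.ι.app j).f ≫ y) ≫ b := by
          rw [F.map_comp]; simp only [Category.assoc]

/-- Main theorem: the colimit `(A, α)` of all finrec coalgebras has an invertible
structure map `α`, and `(A, α⁻¹)` is the initial `F`-algebra. -/
theorem initial_algebra_from_finrec_colimit
    (Fil : Set Cat.{u, u}) (hFil : ∀ J ∈ Fil, IsFiltered J)
    (acc : FilAccessibleData Fil 𝒞) (F : 𝒞 ⥤ 𝒞)
    (hcoprod : ∀ X Y : 𝒞, FilPresentable Fil X → FilPresentable Fil Y →
      HasBinaryCoproduct X Y)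
    (hscheme : Cat.of (FinrecSub F acc.Cp) ∈ Fil)
    (cc : Cocone (ObjectProperty.ι
      (fun R : Endofunctor.Coalgebra F => IsRecursive R ∧ R.V ∈ acc.Cp)))
    (hcreate : IsColimit ((Endofunctor.Coalgebra.forget F).mapCocone cc))
    (hFpres : IsColimit (F.mapCocone ((Endofunctor.Coalgebra.forget F).mapCocone cc)))
    (hiterate : LocallyFinrec Fil
      (⟨F.obj cc.pt.V, F.map cc.pt.str⟩ : Endofunctor.Coalgebra F)) :
    ∃ _ : IsIso cc.pt.str,
      ∀ (B : 𝒞) (b : F.obj B ⟶ B),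
        ∃! h : cc.pt.V ⟶ B, inv cc.pt.str ≫ h = F.map h ≫ b := by
  classical
  haveI : IsFiltered (FinrecSub F acc.Cp) := hFil _ hscheme
  -- Step 1: uniqueness of coalgebra morphisms from a finrec coalgebra into (A, α)
  have uniq : ∀ (R : Endofunctor.Coalgebra F), IsRecursive R → FilPresentable Fil R.V →
      ∀ f g : R.V ⟶ cc.pt.V,
        R.str ≫ F.map f = f ≫ cc.pt.str → R.str ≫ F.map g = g ≫ cc.pt.str → f = g := by
    intro R hrec hpres f g hf hg
    obtain ⟨S, hS, s, p, hsp⟩ := exists_retract Fil acc hpres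
    have hσrec := retract_isRecursive hrec s p hsp
    let SS : FinrecSub F acc.Cp := ⟨⟨S, p ≫ R.str ≫ F.map s⟩, hσrec, hS⟩
    suffices key : ∀ f : R.V ⟶ cc.pt.V, R.str ≫ F.map f = f ≫ cc.pt.str →
        f = s ≫ (cc.ι.app SS).f by rw [key f hf, key g hg]
    clear hf hg f g
    intro f hf
    obtain ⟨P1⟩ := hpres _ hscheme (ObjectProperty.ι _ ⋙ Endofunctor.Coalgebra.forget F)
    haveI : PreservesColimit (ObjectProperty.ι _ ⋙ Endofunctor.Coalgebra.forget F)
      (coyoneda.obj (op R.V)) := P1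
    have c1 : IsColimit ((coyoneda.obj (op R.V)).mapCocone
        ((Endofunctor.Coalgebra.forget F).mapCocone cc)) := isColimitOfPreserves _ hcreate
    obtain ⟨j, f₀, hf₀⟩ := Types.jointly_surjective _ c1 f
    dsimp at hf₀
    change R.V ⟶ j.obj.V at f₀
    change f₀ ≫ (cc.ι.app j).f = f at hf₀
    obtain ⟨P2⟩ := hpres _ hscheme
      ((ObjectProperty.ι _ ⋙ Endofunctor.Coalgebra.forget F) ⋙ F)
    haveI : PreservesColimit ((ObjectProperty.ι _ ⋙ Endofunctor.Coalgebra.forget F) ⋙ F)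
      (coyoneda.obj (op R.V)) := P2
    have c2 : IsColimit ((coyoneda.obj (op R.V)).mapCocone
        (F.mapCocone ((Endofunctor.Coalgebra.forget F).mapCocone cc))) :=
      isColimitOfPreserves _ hFpres
    have heq : ((coyoneda.obj (op R.V)).mapCocone
          (F.mapCocone ((Endofunctor.Coalgebra.forget F).mapCocone cc))).ι.app j
          (f₀ ≫ j.obj.str)
        = ((coyoneda.obj (op R.V)).mapCocone
          (F.mapCocone ((Endofunctor.Coalgebra.forget F).mapCocone cc))).ι.app j
          (R.str ≫ F.map f₀) := by
      dsimp
      have hιh : j.obj.str ≫ F.map (cc.ι.app j).f = (cc.ι.app j).f ≫ cc.pt.str :=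
        (cc.ι.app j).h
      calc (f₀ ≫ j.obj.str) ≫ F.map (cc.ι.app j).f
          = f₀ ≫ (j.obj.str ≫ F.map (cc.ι.app j).f) := by simp only [Category.assoc]
        _ = f₀ ≫ ((cc.ι.app j).f ≫ cc.pt.str) := by rw [hιh]
        _ = f ≫ cc.pt.str := by rw [← Category.assoc, hf₀]
        _ = R.str ≫ F.map f := hf.symm
        _ = R.str ≫ F.map (f₀ ≫ (cc.ι.app j).f) := by rw [hf₀]
        _ = (R.str ≫ F.map f₀) ≫ F.map (cc.ι.app j).f := by
            rw [F.map_comp]; simp only [Category.assoc]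
    rw [Types.FilteredColimit.isColimit_eq_iff _ c2] at heq
    obtain ⟨k, m₁, m₂, hm⟩ := heq
    dsimp at hm
    change (f₀ ≫ j.obj.str) ≫ F.map m₁.hom.f = (R.str ≫ F.map f₀) ≫ F.map m₂.hom.f at hm
    obtain ⟨k', cq, hcq⟩ : ∃ (k' : FinrecSub F acc.Cp) (cq : k ⟶ k'), m₁ ≫ cq = m₂ ≫ cq :=
      ⟨IsFiltered.coeq m₁ m₂, IsFiltered.coeqHom m₁ m₂, IsFiltered.coeq_condition m₁ m₂⟩
    have e1 : (m₁ ≫ cq).hom.f = m₁.hom.f ≫ cq.hom.f := rfl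
    have e2 : (m₁ ≫ cq).hom.f = m₂.hom.f ≫ cq.hom.f := by rw [hcq]; rfl
    have hx : (f₀ ≫ j.obj.str) ≫ F.map (m₁ ≫ cq).hom.f
        = (R.str ≫ F.map f₀) ≫ F.map (m₁ ≫ cq).hom.f := by
      calc (f₀ ≫ j.obj.str) ≫ F.map (m₁ ≫ cq).hom.f
          = ((f₀ ≫ j.obj.str) ≫ F.map m₁.hom.f) ≫ F.map cq.hom.f := by
            rw [e1, F.map_comp]; simp only [Category.assoc]
        _ = ((R.str ≫ F.map f₀) ≫ F.map m₂.hom.f) ≫ F.map cq.hom.f := by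
            rw [hm]
        _ = (R.str ≫ F.map f₀) ≫ F.map (m₁ ≫ cq).hom.f := by
            rw [e2, F.map_comp]; simp only [Category.assoc]
    have hnh : j.obj.str ≫ F.map (m₁ ≫ cq).hom.f = (m₁ ≫ cq).hom.f ≫ k'.obj.str := (m₁ ≫ cq).hom.h
    set p₁ : R.V ⟶ k'.obj.V := f₀ ≫ (m₁ ≫ cq).hom.f with hp₁
    have hcoalg : R.str ≫ F.map p₁ = p₁ ≫ k'.obj.str := by
      calc R.str ≫ F.map p₁ = (R.str ≫ F.map f₀) ≫ F.map (m₁ ≫ cq).hom.f := by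
            rw [hp₁, F.map_comp]; simp only [Category.assoc]
        _ = (f₀ ≫ j.obj.str) ≫ F.map (m₁ ≫ cq).hom.f := hx.symm
        _ = f₀ ≫ (j.obj.str ≫ F.map (m₁ ≫ cq).hom.f) := by simp only [Category.assoc]
        _ = f₀ ≫ ((m₁ ≫ cq).hom.f ≫ k'.obj.str) := by rw [hnh]
        _ = p₁ ≫ k'.obj.str := by rw [hp₁]; simp only [Category.assoc]
    have hp₁ι : p₁ ≫ (cc.ι.app k').f = f := by
      have hw := cc.w (m₁ ≫ cq)
      have hwf : (m₁ ≫ cq).hom.f ≫ (cc.ι.app k').f = (cc.ι.app j).f := by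
        rw [← hw]; rfl
      rw [hp₁, Category.assoc, hwf, hf₀]
    have hcond : SS.obj.str ≫ F.map (p ≫ p₁) = (p ≫ p₁) ≫ k'.obj.str := by
      show (p ≫ R.str ≫ F.map s) ≫ F.map (p ≫ p₁) = (p ≫ p₁) ≫ k'.obj.str
      calc (p ≫ R.str ≫ F.map s) ≫ F.map (p ≫ p₁)
          = p ≫ R.str ≫ (F.map s ≫ F.map (p ≫ p₁)) := by simp only [Category.assoc]
        _ = p ≫ R.str ≫ F.map p₁ := by
            rw [← F.map_comp, ← Category.assoc s p, hsp, Category.id_comp]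
        _ = p ≫ (p₁ ≫ k'.obj.str) := by rw [hcoalg]
        _ = (p ≫ p₁) ≫ k'.obj.str := by simp only [Category.assoc]
    let mhat : SS ⟶ k' := ⟨⟨p ≫ p₁, hcond⟩⟩
    have hw2 := cc.w mhat
    have hw2f : (p ≫ p₁) ≫ (cc.ι.app k').f = (cc.ι.app SS).f := by
      rw [← hw2]; rfl
    calc f = (s ≫ p) ≫ f := by rw [hsp, Category.id_comp]
      _ = s ≫ (p ≫ p₁) ≫ (cc.ι.app k').f := by
          rw [← hp₁ι]; simp only [Category.assoc]
      _ = s ≫ (cc.ι.app SS).f := by rw [hw2f]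
  -- Step 2: canonical coalgebra morphism from any finrec coalgebra into (A, α)
  have exmor : ∀ (R : Endofunctor.Coalgebra F), IsRecursive R → FilPresentable Fil R.V →
      ∃ u : R.V ⟶ cc.pt.V, R.str ≫ F.map u = u ≫ cc.pt.str := by
    intro R hrec hpres
    obtain ⟨S, hS, s, p, hsp⟩ := exists_retract Fil acc hpres
    have hσrec := retract_isRecursive hrec s p hsp
    let SS : FinrecSub F acc.Cp := ⟨⟨S, p ≫ R.str ≫ F.map s⟩, hσrec, hS⟩
    refine ⟨s ≫ (cc.ι.app SS).f, ?_⟩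
    have h1 : SS.obj.str ≫ F.map (cc.ι.app SS).f = (cc.ι.app SS).f ≫ cc.pt.str :=
      (cc.ι.app SS).h
    calc R.str ≫ F.map (s ≫ (cc.ι.app SS).f)
        = (s ≫ p) ≫ R.str ≫ F.map s ≫ F.map (cc.ι.app SS).f := by
          rw [hsp, Category.id_comp, F.map_comp]
      _ = s ≫ (SS.obj.str ≫ F.map (cc.ι.app SS).f) := by simp only [Category.assoc, SS]
      _ = s ≫ ((cc.ι.app SS).f ≫ cc.pt.str) := by rw [h1]
      _ = (s ≫ (cc.ι.app SS).f) ≫ cc.pt.str := by simp only [Category.assoc]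
  -- Step 3: construct the inverse of α from the locally finrec structure on (FA, Fα)
  obtain ⟨J', D', cc', hfin, ⟨hcolim'⟩, hpt⟩ := hiterate
  choose uu hu using fun k => exmor (D'.obj k) (hfin k).1 (hfin k).2
  have hnat : ∀ {k k' : J'} (m : k ⟶ k'), (D'.map m).f ≫ uu k' = uu k := by
    intro k k' m
    refine uniq (D'.obj k) (hfin k).1 (hfin k).2 _ _ ?_ (hu k)
    calc (D'.obj k).str ≫ F.map ((D'.map m).f ≫ uu k')
        = ((D'.obj k).str ≫ F.map (D'.map m).f) ≫ F.map (uu k') := by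
          rw [F.map_comp]; simp only [Category.assoc]
      _ = (D'.map m).f ≫ ((D'.obj k').str ≫ F.map (uu k')) := by
          rw [(D'.map m).h]; simp only [Category.assoc]
      _ = (D'.map m).f ≫ (uu k' ≫ cc.pt.str) := by rw [hu k']
      _ = ((D'.map m).f ≫ uu k') ≫ cc.pt.str := by simp only [Category.assoc]
  let K' : Cocone (D' ⋙ Endofunctor.Coalgebra.forget F) :=
    { pt := cc.pt.V
      ι := { app := fun k => uu k
             naturality := fun k k' m => by
               exact (hnat m).trans (Category.comp_id _).symm } }
  set β' : cc'.pt.V ⟶ cc.pt.V := hcolim'.desc K' with hβ'def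
  have hfac : ∀ k, (cc'.ι.app k).f ≫ β' = uu k := fun k => hcolim'.fac K' k
  have hβ' : cc'.pt.str ≫ F.map β' = β' ≫ cc.pt.str := by
    apply hcolim'.hom_ext
    intro k
    dsimp only [Functor.mapCocone_ι_app, Endofunctor.Coalgebra.forget]
    have hιk : (D'.obj k).str ≫ F.map (cc'.ι.app k).f = (cc'.ι.app k).f ≫ cc'.pt.str :=
      (cc'.ι.app k).h
    calc (cc'.ι.app k).f ≫ cc'.pt.str ≫ F.map β'
        = ((D'.obj k).str ≫ F.map (cc'.ι.app k).f) ≫ F.map β' := by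
          rw [hιk]; simp only [Category.assoc]
      _ = (D'.obj k).str ≫ F.map ((cc'.ι.app k).f ≫ β') := by
          rw [F.map_comp]; simp only [Category.assoc]
      _ = (D'.obj k).str ≫ F.map (uu k) := by rw [hfac k]
      _ = uu k ≫ cc.pt.str := hu k
      _ = ((cc'.ι.app k).f ≫ β') ≫ cc.pt.str := by rw [hfac k]
      _ = (cc'.ι.app k).f ≫ β' ≫ cc.pt.str := by simp only [Category.assoc]
  have hV : cc'.pt.V = F.obj cc.pt.V := congrArg Endofunctor.Coalgebra.V hpt
  have hstr := coalg_eqToHom_str (F := F) hpt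
  -- hstr : cc'.pt.str ≫ F.map (eqToHom hV) = eqToHom hV ≫ F.map cc.pt.str
  set β : F.obj cc.pt.V ⟶ cc.pt.V := eqToHom hV.symm ≫ β' with hβdef
  have hstr' : cc'.pt.str = eqToHom hV ≫ F.map cc.pt.str ≫ F.map (eqToHom hV.symm) := by
    rw [← Category.assoc, ← hstr, Category.assoc, ← F.map_comp, eqToHom_trans, eqToHom_refl,
      F.map_id, Category.comp_id]
  have hβα : β ≫ cc.pt.str = F.map (cc.pt.str ≫ β) := by
    calc β ≫ cc.pt.str = eqToHom hV.symm ≫ β' ≫ cc.pt.str := by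
          rw [hβdef]; simp only [Category.assoc]
      _ = eqToHom hV.symm ≫ cc'.pt.str ≫ F.map β' := by rw [← hβ']
      _ = (eqToHom hV.symm ≫ eqToHom hV) ≫ F.map cc.pt.str ≫ F.map (eqToHom hV.symm) ≫
            F.map β' := by rw [hstr']; simp only [Category.assoc]
      _ = F.map cc.pt.str ≫ F.map (eqToHom hV.symm) ≫ F.map β' := by
          rw [eqToHom_trans, eqToHom_refl, Category.id_comp]
      _ = F.map (cc.pt.str ≫ β) := by
          rw [hβdef, F.map_comp, F.map_comp]
  have h1 : cc.pt.str ≫ β = 𝟙 cc.pt.V := by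
    apply hcreate.hom_ext
    intro j
    have hιh : j.obj.str ≫ F.map (cc.ι.app j).f = (cc.ι.app j).f ≫ cc.pt.str :=
      (cc.ι.app j).h
    have key : (cc.ι.app j).f ≫ cc.pt.str ≫ β = (cc.ι.app j).f := by
      refine uniq j.obj j.property.1 (acc.presentable _ j.property.2) _ _ ?_ hιh
      calc j.obj.str ≫ F.map ((cc.ι.app j).f ≫ cc.pt.str ≫ β)
          = (j.obj.str ≫ F.map (cc.ι.app j).f) ≫ F.map (cc.pt.str ≫ β) := by
            rw [F.map_comp]; simp only [Category.assoc]
        _ = (cc.ι.app j).f ≫ cc.pt.str ≫ F.map (cc.pt.str ≫ β) := by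
            rw [hιh]; simp only [Category.assoc]
        _ = (cc.ι.app j).f ≫ cc.pt.str ≫ β ≫ cc.pt.str := by
            rw [hβα]
        _ = ((cc.ι.app j).f ≫ cc.pt.str ≫ β) ≫ cc.pt.str := by simp only [Category.assoc]
    exact key.trans (Category.comp_id _).symm
  have h2 : β ≫ cc.pt.str = 𝟙 (F.obj cc.pt.V) := by
    rw [hβα, h1, F.map_id]
  haveI ii : IsIso cc.pt.str := ⟨β, h1, h2⟩
  refine ⟨ii, ?_⟩
  intro B b
  obtain ⟨h, hh, hun⟩ := recursive_of_colimit (ObjectProperty.ι _) cc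
    (fun j => j.property.1) hcreate B b
  refine ⟨h, ?_, ?_⟩
  · show inv cc.pt.str ≫ h = F.map h ≫ b
    conv_lhs => rw [hh]
    rw [IsIso.inv_hom_id_assoc]
  · intro y hy
    have hy' : inv cc.pt.str ≫ y = F.map y ≫ b := hy
    apply hun
    show y = cc.pt.str ≫ F.map y ≫ b
    rw [← hy', IsIso.hom_inv_id_assoc]
end

section
/- Let (A, α) be a locally finrec coalgebra arising as colimit of a diagram D : D → F-Coalg of finrec coalgebras with D ∈ Fil, with injections π_i : (X_i, x_i) → (A, α), and suppose F preserves the colimit of V ∘ D. For every t = (P, p, i, p') with P ∈ C_p, p : P → FA, and F π_i ∘ p' = p, the coalgebra on P + X_i with structure F(inr) ∘ [p', x_i] : P + X_i → F(P + X_i) is recursive. -/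
open CategoryTheory CategoryTheory.Limits Opposite

universe u

variable {𝒞 : Type u} [Category.{u} 𝒞]

/-- Let `(A, α) = cc.pt` be a locally finrec coalgebra arising as the colimit (with
injections `π_i = cc.ι.app i`) of a diagram `D : J ⥤ F-Coalg` of finrec coalgebras
with `J ∈ Fil`, created from a colimit in `𝒞` that is preserved by `F`. For every
`t = (P, p, i, p')` with `P ∈ Cp`, `p : P ⟶ F A` and `F π_i ∘ p' = p`, the coalgebra
on `P + X_i` with structure `F(inr) ∘ [p', x_i]` is recursive. -/
theorem triangle_coalgebra_recursive
    (Fil : Set Cat.{u, u}) (hFil : ∀ J ∈ Fil, IsFiltered J)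
    (acc : FilAccessibleData Fil 𝒞) (F : 𝒞 ⥤ 𝒞)
    (hcoprod : ∀ X Y : 𝒞, FilPresentable Fil X → FilPresentable Fil Y →
      HasBinaryCoproduct X Y)
    (J : Cat.{u, u}) (hJ : J ∈ Fil)
    (D : J ⥤ Endofunctor.Coalgebra F)
    (hfinrec : ∀ j : J, IsRecursive (D.obj j) ∧ FilPresentable Fil (D.obj j).V)
    (cc : Cocone D)
    (hcreate : IsColimit ((Endofunctor.Coalgebra.forget F).mapCocone cc))
    (hFpres : IsColimit (F.mapCocone ((Endofunctor.Coalgebra.forget F).mapCocone cc)))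
    (P : 𝒞) (hP : P ∈ acc.Cp)
    (p : P ⟶ F.obj cc.pt.V) (i : J)
    (p' : P ⟶ F.obj (D.obj i).V)
    (htri : p' ≫ F.map (cc.ι.app i).f = p) :
    haveI : HasBinaryCoproduct P (D.obj i).V :=
      hcoprod P (D.obj i).V (acc.presentable P hP) (hfinrec i).2
    IsRecursive (⟨P ⨿ (D.obj i).V,
      Limits.coprod.desc p' (D.obj i).str ≫ F.map Limits.coprod.inr⟩ :
        Endofunctor.Coalgebra F) := by
  haveI : HasBinaryCoproduct P (D.obj i).V :=
    hcoprod P (D.obj i).V (acc.presentable P hP) (hfinrec i).2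
  intro A a
  obtain ⟨e, he, heuniq⟩ := (hfinrec i).1 A a
  refine ⟨coprod.desc (p' ≫ F.map e ≫ a) e, ?_, ?_⟩
  · apply coprod.hom_ext
    · simp only [coprod.inl_desc, Category.assoc, coprod.inl_desc_assoc]
      rw [← F.map_comp_assoc, coprod.inr_desc]
    · simp only [coprod.inr_desc, Category.assoc, coprod.inr_desc_assoc]
      rw [← F.map_comp_assoc, coprod.inr_desc]
      exact he
  · intro h' hh'
    have hr : coprod.inr ≫ h' = e := by
      apply heuniq
      nth_rewrite 1 [hh']
      simp only [coprod.inr_desc_assoc, Category.assoc, ← F.map_comp_assoc]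
    apply coprod.hom_ext
    · rw [coprod.inl_desc, hh']
      simp only [coprod.inl_desc_assoc, Category.assoc, ← F.map_comp_assoc, hr]
    · rw [coprod.inr_desc, hr]
end
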